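/- For real ν > 0, a > 0, y > 0, the Laplace transform ∫₀^∞ t^{ν-1} e^{-yt} cos(at) dt = Γ(ν) (a² + y²)^{-ν/2} cos(ν arctan(a/y)). -/

import Mathlib

open MeasureTheory Set Filter
open scoped Topology

private lemma intOn_real (ν : ℝ) (hν : 0 < ν) {c : ℝ} (hc : 0 < c) :
    IntegrableOn (fun t : ℝ => t ^ (ν - 1) * Real.exp (-(c * t))) (Ioi (0:ℝ)) := by
  have h := Real.GammaIntegral_convergent hν
  have h2 : IntegrableOn (fun x : ℝ => Real.exp (-(c * x)) * (c * x) ^ (ν - 1)) (Ioi (0:ℝ)) := by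
    have := (integrableOn_Ioi_comp_mul_left_iff
      (fun x : ℝ => Real.exp (-x) * x ^ (ν - 1)) 0 hc).2 (by simpa using h)
    simpa using this
  have h3 := h2.const_mul ((c ^ (ν - 1))⁻¹)
  refine IntegrableOn.congr_fun h3 (fun x hx => ?_) measurableSet_Ioi
  have hx0 : (0:ℝ) < x := hx
  have hcp : (0:ℝ) < c ^ (ν - 1) := Real.rpow_pos_of_pos hc _
  rw [Real.mul_rpow hc.le hx0.le]
  field_simp

private lemma meas_aux (ν : ℝ) (z : ℂ) :
    AEStronglyMeasurable (fun t : ℝ => (t:ℂ) ^ ((ν:ℂ) - 1) * Complex.exp (-(z * t)))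
      (volume.restrict (Ioi (0:ℝ))) := by
  apply ContinuousOn.aestronglyMeasurable ?_ measurableSet_Ioi
  refine ContinuousOn.mul ?_ ?_
  · intro t ht
    exact (Complex.continuousAt_ofReal_cpow_const t _ (Or.inr (ne_of_gt ht))).continuousWithinAt
  · exact (Complex.continuous_exp.comp
      ((continuous_const.mul Complex.continuous_ofReal).neg)).continuousOn

private lemma intOn_complex (ν : ℝ) (hν : 0 < ν) {z : ℂ} (hz : 0 < z.re) :
    IntegrableOn (fun t : ℝ => (t:ℂ) ^ ((ν:ℂ) - 1) * Complex.exp (-(z * t))) (Ioi (0:ℝ)) := by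
  refine Integrable.mono' (intOn_real ν hν hz) (meas_aux ν z) ?_
  filter_upwards [ae_restrict_mem measurableSet_Ioi] with t ht
  have ht0 : (0:ℝ) < t := ht
  rw [norm_mul]
  have h1 : ‖(t:ℂ) ^ ((ν:ℂ) - 1)‖ = t ^ (ν - 1) := by
    rw [Complex.norm_cpow_eq_rpow_re_of_pos ht0]
    norm_num
  have h2 : ‖Complex.exp (-(z * t))‖ = Real.exp (-(z.re * t)) := by
    rw [Complex.norm_exp]
    congr 1
    simp [Complex.mul_re]
  rw [h1, h2]

private lemma laplace_cpow (ν : ℝ) (hν : 0 < ν) :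
    ∀ z : ℂ, 0 < z.re →
      (∫ t in Ioi (0:ℝ), (t:ℂ) ^ ((ν:ℂ) - 1) * Complex.exp (-(z * t)))
        = Complex.Gamma ν * z ^ (-(ν:ℂ)) := by
  set U : Set ℂ := {z : ℂ | 0 < z.re} with hU
  have hUo : IsOpen U := isOpen_lt continuous_const Complex.continuous_re
  set F : ℂ → ℂ := fun z => ∫ t in Ioi (0:ℝ), (t:ℂ) ^ ((ν:ℂ) - 1) * Complex.exp (-(z * t))
    with hF_def
  set G : ℂ → ℂ := fun z => Complex.Gamma ν * z ^ (-(ν:ℂ)) with hG_def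
  suffices h : EqOn F G U from fun z hz => h hz
  have hF : AnalyticOnNhd ℂ F U := by
    refine DifferentiableOn.analyticOnNhd ?_ hUo
    intro z₀ hz₀
    apply DifferentiableAt.differentiableWithinAt
    have hz₀re : 0 < z₀.re := hz₀
    set ε : ℝ := z₀.re / 2 with hε
    have hε0 : 0 < ε := half_pos hz₀re
    have key := hasDerivAt_integral_of_dominated_loc_of_deriv_le
      (μ := volume.restrict (Ioi (0:ℝ)))
      (F := fun (z : ℂ) (t : ℝ) => (t:ℂ) ^ ((ν:ℂ) - 1) * Complex.exp (-(z * t)))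
      (F' := fun (z : ℂ) (t : ℝ) =>
        (t:ℂ) ^ ((ν:ℂ) - 1) * (Complex.exp (-(z * t)) * (-(t:ℂ))))
      (x₀ := z₀) (bound := fun t : ℝ => t ^ ((ν + 1) - 1) * Real.exp (-(ε * t))) (Metric.ball_mem_nhds z₀ hε0)
      (Eventually.of_forall fun z => meas_aux ν z)
      (intOn_complex ν hν hz₀re)
      ?_ ?_ (intOn_real (ν + 1) (by linarith) hε0) ?_
    · exact key.2.differentiableAt
    · have hm := (meas_aux ν z₀).mul (Complex.continuous_ofReal.neg.aestronglyMeasurable)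
      exact hm.congr (Eventually.of_forall fun t => by simp only [Pi.mul_apply, Pi.neg_apply]; ring)
    · filter_upwards [ae_restrict_mem measurableSet_Ioi] with t ht z hz
      have ht0 : (0:ℝ) < t := ht
      have hzre : ε ≤ z.re := by
        have h1 : |z.re - z₀.re| ≤ ‖z - z₀‖ := by
          simpa using Complex.abs_re_le_norm (z - z₀)
        have h2 : ‖z - z₀‖ < ε := by
          simpa [Complex.dist_eq] using (Metric.mem_ball.mp hz)
        have := abs_lt.mp (lt_of_le_of_lt h1 h2)
        simp only [hε] at *
        linarith [this.1]
      have h1 : ‖(t:ℂ) ^ ((ν:ℂ) - 1) * (Complex.exp (-(z * t)) * (-(t:ℂ)))‖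
          = t ^ (ν - 1) * (Real.exp (-(z.re * t)) * t) := by
        rw [norm_mul, norm_mul]
        congr 1
        · rw [Complex.norm_cpow_eq_rpow_re_of_pos ht0]
          norm_num
        congr 1
        · rw [Complex.norm_exp]
          congr 1
          simp [Complex.mul_re]
        · simpa using abs_of_pos ht0
      rw [h1]
      have h2 : t ^ (ν - 1) * (Real.exp (-(z.re * t)) * t)
          = t ^ ((ν + 1) - 1) * Real.exp (-(z.re * t)) := by
        have : t ^ ((ν + 1) - 1) = t ^ (ν - 1) * t := by
          rw [show ν + 1 - 1 = (ν - 1) + 1 by ring, Real.rpow_add ht0, Real.rpow_one]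
        rw [this]; ring
      rw [h2]
      have h3 : Real.exp (-(z.re * t)) ≤ Real.exp (-(ε * t)) := by
        apply Real.exp_le_exp.mpr
        nlinarith
      have h4 : (0:ℝ) ≤ t ^ ((ν + 1) - 1) := Real.rpow_nonneg ht0.le _
      nlinarith
    · refine Eventually.of_forall fun t => fun z _ => ?_
      exact ((hasDerivAt_mul_const (t:ℂ)).neg.cexp).const_mul ((t:ℂ) ^ ((ν:ℂ) - 1))
  have hG : AnalyticOnNhd ℂ G U := by
    refine DifferentiableOn.analyticOnNhd ?_ hUo
    intro z hz
    apply DifferentiableAt.differentiableWithinAt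
    refine (differentiableAt_const _).mul ?_
    exact ((hasDerivAt_id z).cpow_const (Or.inl hz)).differentiableAt
  have hUc : IsPreconnected U := (convex_halfSpace_re_gt 0).isPreconnected
  have h1 : (1:ℂ) ∈ U := by simp [hU]
  have heq : ∀ r : ℝ, 0 < r → F ((r:ℝ):ℂ) = G ((r:ℝ):ℂ) := by
    intro r hr
    have hkey := Complex.integral_cpow_mul_exp_neg_mul_Ioi
      (a := (ν:ℂ)) (by simpa using hν) hr
    simp only [hF_def, hG_def]
    rw [hkey, one_div, Complex.inv_cpow _ _ ?_, ← Complex.cpow_neg, mul_comm]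
    rw [Complex.arg_ofReal_of_nonneg hr.le]
    exact Ne.symm Real.pi_ne_zero
  have hfreq : ∃ᶠ z in 𝓝[≠] (1:ℂ), F z = G z := by
    have hu : Tendsto (fun n : ℕ => (((1 + ((n:ℝ)+1)⁻¹ : ℝ)):ℂ)) atTop (𝓝[≠] (1:ℂ)) := by
      apply tendsto_nhdsWithin_of_tendsto_nhds_of_eventually_within
      · have h0 : Tendsto (fun n : ℕ => (1 + ((n:ℝ)+1)⁻¹ : ℝ)) atTop (𝓝 (1 + 0)) := by
          refine tendsto_const_nhds.add ?_
          simpa [one_div] using tendsto_one_div_add_atTop_nhds_zero_nat (𝕜 := ℝ)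
        have := (Complex.continuous_ofReal.tendsto (1 + 0 : ℝ)).comp h0
        simpa [Function.comp_def] using this
      · refine Eventually.of_forall fun n => ?_
        simp only [mem_compl_iff, mem_singleton_iff]
        intro hcon
        have : (1 + ((n:ℝ)+1)⁻¹ : ℝ) = 1 := by exact_mod_cast hcon
        have hpos : (0:ℝ) < ((n:ℝ)+1)⁻¹ := by positivity
        linarith
    have hall : ∀ n : ℕ, F (((1 + ((n:ℝ)+1)⁻¹ : ℝ)):ℂ) = G (((1 + ((n:ℝ)+1)⁻¹ : ℝ)):ℂ) :=
      fun n => heq (1 + ((n:ℝ)+1)⁻¹) (by positivity)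
    exact hu.frequently (Frequently.of_forall hall)
  exact hF.eqOn_of_preconnected_of_frequently_eq hG hUc h1 hfreq

theorem laplace_power_cos (ν a y : ℝ) (hν : 0 < ν) (ha : 0 < a) (hy : 0 < y) :
    ∫ t in Ioi (0:ℝ), t ^ (ν - 1) * Real.exp (-(y * t)) * Real.cos (a * t)
      = Real.Gamma ν * (a ^ 2 + y ^ 2) ^ (-(ν / 2)) * Real.cos (ν * Real.arctan (a / y)) := by
  set z : ℂ := (y:ℂ) - (a:ℂ) * Complex.I with hzdef
  have hzre : z.re = y := by simp [hzdef]
  have hzim : z.im = -a := by simp [hzdef]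
  have hz : 0 < z.re := by rw [hzre]; exact hy
  have hz0 : z ≠ 0 := by
    intro hcon; rw [hcon] at hz; simp at hz
  have hkey := laplace_cpow ν hν z hz
  have hint := intOn_complex ν hν hz
  have hre : (∫ t in Ioi (0:ℝ), (t:ℂ) ^ ((ν:ℂ) - 1) * Complex.exp (-(z * t))).re
      = ∫ t in Ioi (0:ℝ), t ^ (ν - 1) * Real.exp (-(y * t)) * Real.cos (a * t) := by
    have hIR := integral_re hint
    simp only [RCLike.re_eq_complex_re] at hIR
    rw [← hIR]
    refine setIntegral_congr_fun measurableSet_Ioi fun t ht => ?_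
    have ht0 : (0:ℝ) < t := ht
    have h1 : (t:ℂ) ^ ((ν:ℂ) - 1) = ((t ^ (ν - 1) : ℝ) : ℂ) := by
      rw [Complex.ofReal_cpow ht0.le]; push_cast; ring_nf
    rw [h1, Complex.re_ofReal_mul]
    have h2 : (Complex.exp (-(z * t))).re = Real.exp (-(y * t)) * Real.cos (a * t) := by
      rw [Complex.exp_re]
      have hre' : (-(z * (t:ℂ))).re = -(y * t) := by
        simp [Complex.mul_re, hzre, hzim]
      have him' : (-(z * (t:ℂ))).im = a * t := by
        simp [Complex.mul_im, hzre, hzim]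
      rw [hre', him']
    rw [h2]; ring
  have harg : z.arg = -Real.arctan (a / y) := by
    have h2 : |z.arg| < Real.pi / 2 := Complex.abs_arg_lt_pi_div_two_iff.mpr (Or.inl hz)
    have h2' := abs_lt.mp h2
    have h3 := Real.arctan_tan (x := z.arg) h2'.1 h2'.2
    rw [← h3, Complex.tan_arg, hzre, hzim]
    rw [neg_div, Real.arctan_neg]
  have habs : ‖z‖ = Real.sqrt (a ^ 2 + y ^ 2) := by
    rw [Complex.norm_def, Complex.normSq_apply, hzre, hzim]
    ring_nf
  have hR : (Complex.Gamma (ν:ℂ) * z ^ (-(ν:ℂ))).re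
      = Real.Gamma ν * (a ^ 2 + y ^ 2) ^ (-(ν / 2)) * Real.cos (ν * Real.arctan (a / y)) := by
    rw [Complex.Gamma_ofReal, Complex.re_ofReal_mul]
    have hcpow : z ^ (-(ν:ℂ)) = Complex.exp (Complex.log z * -(ν:ℂ)) :=
      Complex.cpow_def_of_ne_zero hz0 _
    rw [hcpow, Complex.exp_re]
    have hwre : (Complex.log z * -(ν:ℂ)).re = -ν * Real.log ‖z‖ := by
      simp [Complex.mul_re, Complex.log_re]
      ring
    have hwim : (Complex.log z * -(ν:ℂ)).im = -ν * z.arg := by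
      simp [Complex.mul_im, Complex.log_im]
      ring
    rw [hwre, hwim, harg]
    have hq : (0:ℝ) < a ^ 2 + y ^ 2 := by positivity
    have habs' : Real.exp (-ν * Real.log ‖z‖)
        = (a ^ 2 + y ^ 2) ^ (-(ν / 2)) := by
      rw [habs]
      have hs : (0:ℝ) < Real.sqrt (a ^ 2 + y ^ 2) := Real.sqrt_pos.mpr hq
      rw [mul_comm, ← Real.rpow_def_of_pos hs, Real.sqrt_eq_rpow,
        ← Real.rpow_mul hq.le]
      congr 1
      ring
    rw [habs']
    have : -ν * -Real.arctan (a / y) = ν * Real.arctan (a / y) := by ring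
    rw [this]
    ring
  rw [← hre, hkey, hR]
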